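/- Let X be a T0 space, A a closed subset of X, and {U_n : n ∈ ℕ} a decreasing sequence of open subsets of X such that A is a minimal closed set meeting every U_n. If x_n ∈ U_n ∩ A for each n, then every subset of {x_n : n ∈ ℕ} is compact. -/
import Mathlib


/-- If `A` is a minimal closed set meeting every member of a decreasing sequence of open
sets `U n`, and `x n ∈ U n ∩ A`, then every subset of `{x n : n ∈ ℕ}` is compact. -/
theorem stmt11 {X : Type*} [TopologicalSpace X] [T0Space X] (A : Set X) (hA : IsClosed A)
    (U : ℕ → Set X) (hop : ∀ n, IsOpen (U n)) (hdec : ∀ n, U (n + 1) ⊆ U n)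
    (hmeet : ∀ n, (A ∩ U n).Nonempty)
    (hmin : ∀ B : Set X, B ⊆ A → IsClosed B → (∀ n, (B ∩ U n).Nonempty) → B = A)
    (x : ℕ → X) (hx : ∀ n, x n ∈ U n ∩ A)
    (E : Set X) (hE : E ⊆ Set.range x) : IsCompact E := by
  have hanti : Antitone U := antitone_nat_of_succ_le hdec
  have tail : ∀ V : Set X, IsOpen V → ∀ k, x k ∈ V → ∃ N, ∀ m, N ≤ m → x m ∈ V := by
    intro V hV k hk
    by_cases h : ∀ n, ((A \ V) ∩ U n).Nonempty
    · have heq := hmin (A \ V) Set.diff_subset (hA.sdiff hV) h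
      exfalso
      have hxA : x k ∈ A := (hx k).2
      rw [← heq] at hxA
      exact hxA.2 hk
    · push_neg at h
      obtain ⟨n, hn⟩ := h
      refine ⟨n, fun m hm => ?_⟩
      by_contra hxm
      exact Set.eq_empty_iff_forall_notMem.mp hn (x m) ⟨⟨(hx m).2, hxm⟩, hanti hm (hx m).1⟩
  rcases E.eq_empty_or_nonempty with rfl | ⟨e, he⟩
  · exact isCompact_empty
  · apply isCompact_of_finite_subcover
    intro ι V hV hcov
    obtain ⟨i₀, hi₀⟩ := Set.mem_iUnion.mp (hcov he)
    obtain ⟨k, hk⟩ := hE he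
    obtain ⟨N, hN⟩ := tail (V i₀) (hV i₀) k (hk.symm ▸ hi₀)
    classical
    have choice : ∀ m : ℕ, ∃ i, x m ∈ E → x m ∈ V i := by
      intro m
      by_cases hm : x m ∈ E
      · obtain ⟨i, hi⟩ := Set.mem_iUnion.mp (hcov hm)
        exact ⟨i, fun _ => hi⟩
      · exact ⟨i₀, fun h => absurd h hm⟩
    choose f hf using choice
    refine ⟨insert i₀ ((Finset.range N).image f), fun y hy => ?_⟩
    obtain ⟨m, rfl⟩ := hE hy
    by_cases hm : N ≤ m
    · exact Set.mem_biUnion (Finset.mem_insert_self _ _) (hN m hm)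
    · exact Set.mem_biUnion
        (Finset.mem_insert_of_mem
          (Finset.mem_image_of_mem f (Finset.mem_range.mpr (Nat.lt_of_not_le hm))))
        (hf m hy)
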